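/- Let Q_N(λ) = λ^N + Σ_{k=0}^{N-1} q_k λ^k be a monic complex polynomial and let λ_0 be a zero of Q_N of multiplicity m. Then there exist ε > 0 and C > 0 such that for every monic polynomial Q̃_N(λ) = λ^N + Σ_{k=0}^{N-1} q̃_k λ^k with δ := max_k |q_k - q̃_k| ≤ ε, the polynomial Q̃_N has exactly m zeros λ̃_1, ..., λ̃_m (counted with multiplicity) satisfying |λ̃_j - λ_0| ≤ C δ^{1/m} for all j = 1, ..., m. -/

import Mathlib

open Polynomial Finset

lemma eval_sub_bound {N : ℕ} {Q Q' : ℂ[X]} (hQ : Q.Monic) (hQ' : Q'.Monic)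
    (hdQ : Q.natDegree = N) (hdQ' : Q'.natDegree = N) {δ : ℝ} (hδ : 0 ≤ δ)
    (h : ∀ k < N, ‖Q.coeff k - Q'.coeff k‖ ≤ δ) (z : ℂ) :
    ‖Q.eval z - Q'.eval z‖ ≤ N * δ * (max 1 ‖z‖) ^ N := by
  have h1 : Q.eval z = ∑ i ∈ range (N + 1), Q.coeff i * z ^ i := by
    rw [eval_eq_sum_range, hdQ]
  have h2 : Q'.eval z = ∑ i ∈ range (N + 1), Q'.coeff i * z ^ i := by
    rw [eval_eq_sum_range, hdQ']
  have h3 : Q.eval z - Q'.eval z = ∑ i ∈ range N, (Q.coeff i - Q'.coeff i) * z ^ i := by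
    rw [h1, h2, ← Finset.sum_sub_distrib, Finset.sum_range_succ]
    have : Q.coeff N - Q'.coeff N = 0 := by
      have e1 : Q.coeff N = 1 := by rw [← hdQ]; exact hQ.coeff_natDegree
      have e2 : Q'.coeff N = 1 := by rw [← hdQ']; exact hQ'.coeff_natDegree
      rw [e1, e2, sub_self]
    simp only [← sub_mul, this, zero_mul, add_zero]
  rw [h3]
  calc ‖∑ i ∈ range N, (Q.coeff i - Q'.coeff i) * z ^ i‖
      ≤ ∑ i ∈ range N, ‖(Q.coeff i - Q'.coeff i) * z ^ i‖ := norm_sum_le _ _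
    _ ≤ ∑ _i ∈ range N, δ * (max 1 ‖z‖) ^ N := by
        apply Finset.sum_le_sum
        intro i hi
        rw [norm_mul, norm_pow]
        apply mul_le_mul (h i (Finset.mem_range.1 hi)) _ (by positivity) hδ
        calc ‖z‖ ^ i ≤ (max 1 ‖z‖) ^ i := by
              apply pow_le_pow_left₀ (norm_nonneg _) (le_max_right _ _)
          _ ≤ (max 1 ‖z‖) ^ N := by
              apply pow_le_pow_right₀ (le_max_left _ _) (le_of_lt (Finset.mem_range.1 hi))
    _ = N * δ * (max 1 ‖z‖) ^ N := by
        rw [Finset.sum_const, Finset.card_range, nsmul_eq_mul]; ring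


lemma list_eq_map_univ {N : ℕ} (l : List ℂ) (h : l.length = N) :
    (l : Multiset ℂ) = Multiset.map (fun i : Fin N => l.getD i 0) Finset.univ.val := by
  have hl : l = List.ofFn (fun i : Fin N => l.getD i 0) := by
    apply List.ext_getElem (by simp [h])
    intro i h1 h2
    simp [List.getD_eq_getElem?_getD, List.getElem?_eq_getElem h1]
  conv_lhs => rw [hl]
  rw [List.ofFn_eq_map, Fin.univ_def]
  rfl

lemma count_roots_near (N m : ℕ) (hm : 1 ≤ m) (Q : ℂ[X]) (hQ : Q.Monic)
    (hQdeg : Q.natDegree = N) (lam0 : ℂ) (hmult : Q.rootMultiplicity lam0 = m)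
    (r : ℝ) (hr : 0 < r) (hsep : ∀ z ∈ Q.roots, z ≠ lam0 → r < ‖z - lam0‖) :
    ∃ ε > (0:ℝ), ∀ Q' : ℂ[X], Q'.Monic → Q'.natDegree = N →
      (∀ k < N, ‖Q.coeff k - Q'.coeff k‖ ≤ ε) →
      Multiset.card (Q'.roots.filter (fun z => ‖z - lam0‖ ≤ r)) = m := by
  classical
  by_contra hcon
  push_neg at hcon
  have hseq : ∀ n : ℕ, ∃ Q' : ℂ[X], Q'.Monic ∧ Q'.natDegree = N ∧
      (∀ k < N, ‖Q.coeff k - Q'.coeff k‖ ≤ 1/(n+1)) ∧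
      Multiset.card (Q'.roots.filter (fun z => ‖z - lam0‖ ≤ r)) ≠ m := by
    intro n
    exact hcon (1/(n+1)) (by positivity)
  choose P hPm hPd hPc hPcount using hseq
  -- root bound
  set S : ℝ := ((((Finset.range N).sup fun k => ‖Q.coeff k‖₊) : NNReal) : ℝ) with hS
  have hroot : ∀ n : ℕ, ∀ z ∈ (P n).roots, ‖z‖ ≤ S + 2 := by
    intro n z hz
    have hz' : (P n).IsRoot z := isRoot_of_mem_roots hz
    have h1 := hz'.norm_lt_cauchyBound (hPm n).ne_zero
    have h2 : ((P n).cauchyBound : ℝ) ≤ S + 2 := by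
      rw [cauchyBound]
      have hl : ‖(P n).leadingCoeff‖₊ = 1 := by rw [(hPm n).leadingCoeff, nnnorm_one]
      rw [hl, div_one, hPd n]
      have h3 : (Finset.range N).sup (fun k => ‖(P n).coeff k‖₊)
          ≤ ((Finset.range N).sup fun k => ‖Q.coeff k‖₊) + 1 := by
        apply Finset.sup_le
        intro k hk
        have h4 : ‖(P n).coeff k‖ ≤ ‖Q.coeff k‖ + 1 := by
          have h5 := hPc n k (Finset.mem_range.1 hk)
          have h6 : (1:ℝ)/(n+1) ≤ 1 := by
            rw [div_le_one (by positivity)]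
            simp [Nat.cast_nonneg]
          have h7 : (P n).coeff k = Q.coeff k - (Q.coeff k - (P n).coeff k) := by ring
          calc ‖(P n).coeff k‖ = ‖Q.coeff k - (Q.coeff k - (P n).coeff k)‖ := by rw [← h7]
            _ ≤ ‖Q.coeff k‖ + ‖Q.coeff k - (P n).coeff k‖ := norm_sub_le _ _
            _ ≤ ‖Q.coeff k‖ + 1 := by linarith
        have h4' : ‖(P n).coeff k‖₊ ≤ ‖Q.coeff k‖₊ + 1 := by
          rw [← NNReal.coe_le_coe]
          push_cast [coe_nnnorm]
          exact h4
        exact h4'.trans (add_le_add_left (Finset.le_sup (f := fun k => ‖Q.coeff k‖₊) hk) 1)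
      have h3' := NNReal.coe_le_coe.2 (add_le_add_right h3 1)
      push_cast at h3'
      rw [hS]
      push_cast
      linarith
    calc ‖z‖ = (‖z‖₊ : ℝ) := rfl
      _ ≤ ((P n).cauchyBound : ℝ) := by exact_mod_cast le_of_lt h1
      _ ≤ S + 2 := h2
  -- root vectors
  have hlen : ∀ n : ℕ, ((P n).roots.toList).length = N := by
    intro n
    rw [Multiset.length_toList, ← hPd n]
    exact splits_iff_card_roots.1 (IsAlgClosed.splits _)
  set v : ℕ → Fin N → ℂ := fun n i => ((P n).roots.toList).getD i 0 with hv
  have hrootsv : ∀ n : ℕ, (P n).roots = Multiset.map (v n) Finset.univ.val := by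
    intro n
    conv_lhs => rw [← Multiset.coe_toList ((P n).roots)]
    exact list_eq_map_univ _ (hlen n)
  have hvmem : ∀ n i, v n i ∈ (P n).roots := by
    intro n i
    rw [hrootsv n]
    exact Multiset.mem_map_of_mem _ (Finset.mem_univ i)
  -- compactness
  have hmemball : ∀ n, v n ∈ Metric.closedBall (0 : Fin N → ℂ) (S + 2) := by
    intro n
    rw [Metric.mem_closedBall]
    rw [dist_pi_le_iff (by positivity)]
    intro i
    simp only [Pi.zero_apply, dist_zero_right]
    exact hroot n _ (hvmem n i)
  obtain ⟨a, -, φ, hφ, hconv⟩ :=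
    tendsto_subseq_of_bounded Metric.isBounded_closedBall hmemball
  have hcoord : ∀ i, Filter.Tendsto (fun n => v (φ n) i) Filter.atTop (nhds (a i)) := by
    intro i
    exact (tendsto_pi_nhds.1 hconv) i
  -- product formula for evals
  have hProd : ∀ n, ∀ z : ℂ, (P n).eval z = ∏ i : Fin N, (z - v n i) := by
    intro n z
    conv_lhs => rw [(IsAlgClosed.splits (P n)).eq_prod_roots_of_monic (hPm n)
      , hrootsv n]
    rw [Multiset.map_map, eval_multiset_prod, Multiset.map_map, Finset.prod_eq_multiset_prod]
    congr 1
    apply Multiset.map_congr rfl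
    intro i _
    simp
  -- eval convergence
  have hQeval : ∀ z : ℂ, Q.eval z = ∏ i : Fin N, (z - a i) := by
    intro z
    have T1 : Filter.Tendsto (fun n => (P n).eval z) Filter.atTop (nhds (Q.eval z)) := by
      rw [tendsto_iff_norm_sub_tendsto_zero]
      refine squeeze_zero (g := fun n : ℕ => (N : ℝ) * (1/((n:ℝ)+1)) * (max 1 ‖z‖) ^ N)
        (fun n => norm_nonneg _) (fun n => ?_) ?_
      · rw [← norm_neg, neg_sub]
        exact eval_sub_bound hQ (hPm n) hQdeg (hPd n) (by positivity) (hPc n) z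
      · have := (tendsto_one_div_add_atTop_nhds_zero_nat.const_mul (N : ℝ)).mul_const
          ((max 1 ‖z‖) ^ N)
        simpa using this
    have T2 : Filter.Tendsto (fun n => (P (φ n)).eval z) Filter.atTop (nhds (Q.eval z)) :=
      T1.comp hφ.tendsto_atTop
    have T3 : Filter.Tendsto (fun n => (P (φ n)).eval z) Filter.atTop
        (nhds (∏ i : Fin N, (z - a i))) := by
      simp only [hProd]
      exact tendsto_finset_prod _ (fun i _ => tendsto_const_nhds.sub (hcoord i))
    exact tendsto_nhds_unique T2 T3
  have hQfac : Q = ∏ i : Fin N, (X - C (a i)) := by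
    apply Polynomial.funext
    intro w
    rw [hQeval w, eval_prod]
    apply Finset.prod_congr rfl
    intro i _
    simp
  have hQroots : Q.roots = Multiset.map a Finset.univ.val := by
    have h1 : (∏ i : Fin N, (X - C (a i)))
        = (Multiset.map (fun w => X - C w) (Multiset.map a Finset.univ.val)).prod := by
      rw [Multiset.map_map, Finset.prod_eq_multiset_prod]
      rfl
    rw [hQfac, h1, roots_multiset_prod_X_sub_C]
  have hcount : Multiset.count lam0 (Multiset.map a Finset.univ.val) = m := by
    rw [← hQroots, count_roots, hmult]
  -- N is positive
  have hmN : m ≤ N := by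
    have h1 := Multiset.count_le_card lam0 (Multiset.map a Finset.univ.val)
    rw [hcount, Multiset.card_map] at h1
    simpa using h1
  have hNpos : 0 < N := lt_of_lt_of_le hm hmN
  haveI : Nonempty (Fin N) := ⟨⟨0, hNpos⟩⟩
  -- separation gap
  set g : Fin N → ℝ := fun i => if a i = lam0 then r else ‖a i - lam0‖ - r with hg
  have hamem : ∀ i, a i ∈ Q.roots := by
    intro i
    rw [hQroots]
    exact Multiset.mem_map_of_mem _ (Finset.mem_univ i)
  have hgpos : ∀ i, 0 < g i := by
    intro i
    rw [hg]
    by_cases hi : a i = lam0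
    · simpa [hi] using hr
    · have := hsep (a i) (hamem i) hi
      simp only [if_neg hi]
      linarith
  set η : ℝ := Finset.univ.inf' Finset.univ_nonempty g with hη
  have hηpos : 0 < η := by
    rw [hη, Finset.lt_inf'_iff]
    intro i _
    exact hgpos i
  have hηle : ∀ i, η ≤ g i := fun i => Finset.inf'_le g (Finset.mem_univ i)
  have hηr : η ≤ r := by
    have h1 : 0 < Multiset.count lam0 (Multiset.map a Finset.univ.val) := by
      rw [hcount]; exact hm
    rw [Multiset.count_pos] at h1
    obtain ⟨i, -, hi⟩ := Multiset.mem_map.1 h1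
    have e : g i = r := by rw [hg]; simp [hi]
    have := hηle i
    rwa [e] at this
  -- pick a large index
  obtain ⟨n₀, hn₀⟩ := (Metric.tendsto_atTop.1 hconv) η hηpos
  have hdists : ∀ i, dist (v (φ n₀) i) (a i) < η := by
    have := hn₀ n₀ le_rfl
    exact (dist_pi_lt_iff hηpos).1 this
  -- compute the count for P (φ n₀)
  apply hPcount (φ n₀)
  rw [hrootsv (φ n₀), Multiset.filter_map, Multiset.card_map, ← hcount,
    Multiset.count_map]
  congr 1
  apply Multiset.filter_congr
  intro i _
  simp only [Function.comp]
  constructor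
  · intro hle
    by_contra hne
    have hne' : a i ≠ lam0 := fun h => hne h.symm
    have h1 : η ≤ ‖a i - lam0‖ - r := by
      have e : g i = ‖a i - lam0‖ - r := by rw [hg]; simp [hne']
      have := hηle i
      rwa [e] at this
    have h2 : ‖a i - lam0‖ ≤ ‖a i - v (φ n₀) i‖ + ‖v (φ n₀) i - lam0‖ := by
      have h3 : a i - lam0 = (a i - v (φ n₀) i) + (v (φ n₀) i - lam0) := by ring
      rw [h3]
      exact norm_add_le _ _
    have h4 : ‖a i - v (φ n₀) i‖ < η := by
      rw [← dist_eq_norm, dist_comm]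
      exact hdists i
    linarith
  · intro hi
    have h1 : ‖v (φ n₀) i - lam0‖ < η := by
      rw [hi, ← dist_eq_norm]
      exact hdists i
    linarith


/-- Stability of a zero of multiplicity `m` of a monic polynomial under small
perturbations of the coefficients: if the coefficients of a monic polynomial `Q̃` of the
same degree differ from those of `Q` by at most `δ ≤ ε`, then `Q̃` has exactly `m` zeros
(counted with multiplicity) in the disc `|z - λ₀| ≤ C δ^{1/m}`. -/
theorem stmt_2 (N m : ℕ) (Q : ℂ[X]) (hQ : Q.Monic) (hQdeg : Q.natDegree = N)
    (lam0 : ℂ) (hm : 1 ≤ m) (hmult : Q.rootMultiplicity lam0 = m) :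
    ∃ ε > (0:ℝ), ∃ C > (0:ℝ), ∀ (Q' : ℂ[X]), Q'.Monic → Q'.natDegree = N →
      ∀ δ : ℝ, 0 ≤ δ → δ ≤ ε → (∀ k < N, ‖Q.coeff k - Q'.coeff k‖ ≤ δ) →
        Multiset.card (Q'.roots.filter (fun z => ‖z - lam0‖ ≤ C * δ ^ ((1:ℝ) / m))) = m := by
  classical
  -- m ≤ N
  have hmN : m ≤ N := by
    have h1 : (X - C lam0) ^ m ∣ Q := hmult ▸ Q.pow_rootMultiplicity_dvd lam0
    have h2 := natDegree_le_of_dvd h1 hQ.ne_zero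
    rwa [natDegree_pow, natDegree_X_sub_C, mul_one, hQdeg] at h2
  have hN : 0 < N := lt_of_lt_of_le hm hmN
  -- factor out the root
  set R : ℂ[X] := Q /ₘ (X - C lam0) ^ m with hR
  have hRfac : (X - C lam0) ^ m * R = Q := by
    rw [hR, ← hmult]
    exact Q.pow_mul_divByMonic_rootMultiplicity_eq lam0
  have hR0 : R.eval lam0 ≠ 0 := by
    rw [hR, ← hmult]
    exact eval_divByMonic_pow_rootMultiplicity_ne_zero lam0 hQ.ne_zero
  set c : ℝ := ‖R.eval lam0‖ / 2 with hc
  have hcpos : 0 < c := by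
    rw [hc]
    have := norm_pos_iff.2 hR0
    linarith
  -- a radius on which ‖R‖ ≥ c
  obtain ⟨ρ', hρ'pos, hρ'⟩ : ∃ ρ' > (0:ℝ), ∀ z : ℂ, ‖z - lam0‖ ≤ ρ' → c ≤ ‖R.eval z‖ := by
    have hcont : ContinuousAt (fun z : ℂ => R.eval z) lam0 := (Polynomial.continuous R).continuousAt
    obtain ⟨δ₀, hδ₀, hball⟩ := Metric.continuousAt_iff.1 hcont c hcpos
    refine ⟨δ₀ / 2, by linarith, fun z hz => ?_⟩
    have h1 : dist z lam0 < δ₀ := by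
      rw [dist_eq_norm]; linarith
    have h2 := hball h1
    rw [dist_eq_norm] at h2
    have h3 : ‖R.eval lam0‖ - ‖R.eval z‖ ≤ ‖R.eval z - R.eval lam0‖ := by
      rw [norm_sub_rev]
      exact norm_sub_norm_le _ _
    have h4 : ‖R.eval lam0‖ = 2 * c := by rw [hc]; ring
    linarith
  -- a separation radius
  obtain ⟨r0, hr0, hr0ρ, hsep⟩ : ∃ r0 : ℝ, 0 < r0 ∧ r0 ≤ ρ' ∧
      ∀ z ∈ Q.roots, z ≠ lam0 → r0 < ‖z - lam0‖ := by
    set T : Finset ℂ := Q.roots.toFinset.erase lam0 with hT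
    by_cases hTne : T.Nonempty
    · set d : ℝ := T.inf' hTne (fun z => ‖z - lam0‖) with hd
      have hdpos : 0 < d := by
        rw [hd, Finset.lt_inf'_iff]
        intro z hz
        have hzne : z ≠ lam0 := (Finset.mem_erase.1 hz).1
        have : z - lam0 ≠ 0 := sub_ne_zero.2 hzne
        exact norm_pos_iff.2 this
      refine ⟨min ρ' (d/2), by positivity, min_le_left _ _, fun z hz hzne => ?_⟩
      have hzT : z ∈ T := Finset.mem_erase.2 ⟨hzne, Multiset.mem_toFinset.2 hz⟩
      have h1 : d ≤ ‖z - lam0‖ := Finset.inf'_le _ hzT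
      calc min ρ' (d/2) ≤ d/2 := min_le_right _ _
        _ < d := by linarith
        _ ≤ ‖z - lam0‖ := h1
    · refine ⟨ρ', hρ'pos, le_refl _, fun z hz hzne => ?_⟩
      exfalso
      exact hTne ⟨z, Finset.mem_erase.2 ⟨hzne, Multiset.mem_toFinset.2 hz⟩⟩
  -- the counting radius
  obtain ⟨ε₁, hε₁, hkey⟩ := count_roots_near N m hm Q hQ hQdeg lam0 hmult r0 hr0 hsep
  -- the constants
  set B : ℝ := ‖lam0‖ + ρ' with hB
  set M : ℝ := (max 1 B) ^ N with hM
  have hMpos : 0 < M := by rw [hM]; positivity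
  set K : ℝ := N * M / c with hK
  have hKpos : 0 < K := by
    rw [hK]
    have : (0:ℝ) < N := by exact_mod_cast hN
    positivity
  set CC : ℝ := K ^ ((1:ℝ)/m) with hCC
  have hCpos : 0 < CC := Real.rpow_pos_of_pos hKpos _
  have hmR : (0:ℝ) < m := by exact_mod_cast hm
  refine ⟨min ε₁ ((r0 / CC) ^ m), by positivity, CC, hCpos, ?_⟩
  intro Q' hQ'm hQ'd δ hδ0 hδε hcoeff
  have hδ1 : δ ≤ ε₁ := le_trans hδε (min_le_left _ _)
  have hδ2 : δ ≤ (r0 / CC) ^ m := le_trans hδε (min_le_right _ _)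
  -- C δ^{1/m} ≤ r0
  have hpow : ∀ x : ℝ, 0 ≤ x → ((x ^ m : ℝ)) ^ ((1:ℝ)/m) = x := by
    intro x hx
    rw [← Real.rpow_natCast x m, ← Real.rpow_mul hx, mul_one_div, div_self (ne_of_gt hmR),
      Real.rpow_one]
  have hCδ : CC * δ ^ ((1:ℝ)/m) ≤ r0 := by
    have h1 : δ ^ ((1:ℝ)/m) ≤ ((r0 / CC) ^ m) ^ ((1:ℝ)/m) :=
      Real.rpow_le_rpow hδ0 hδ2 (by positivity)
    rw [hpow _ (by positivity)] at h1
    have h2 := mul_le_mul_of_nonneg_left h1 hCpos.le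
    rwa [mul_div_cancel₀ _ (ne_of_gt hCpos)] at h2
  -- sharp bound on close roots
  have hsharp : ∀ z ∈ Q'.roots, ‖z - lam0‖ ≤ r0 → ‖z - lam0‖ ≤ CC * δ ^ ((1:ℝ)/m) := by
    intro z hz hzr
    have hz0 : Q'.eval z = 0 := isRoot_of_mem_roots hz
    have hzB : ‖z‖ ≤ B := by
      have h1 : z = (z - lam0) + lam0 := by ring
      calc ‖z‖ = ‖(z - lam0) + lam0‖ := by rw [← h1]
        _ ≤ ‖z - lam0‖ + ‖lam0‖ := norm_add_le _ _
        _ ≤ B := by rw [hB]; linarith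
    have h1 : ‖Q.eval z‖ ≤ N * δ * M := by
      have h2 : ‖Q.eval z‖ = ‖Q.eval z - Q'.eval z‖ := by rw [hz0, sub_zero]
      rw [h2]
      calc ‖Q.eval z - Q'.eval z‖ ≤ N * δ * (max 1 ‖z‖) ^ N :=
            eval_sub_bound hQ hQ'm hQdeg hQ'd hδ0 hcoeff z
        _ ≤ N * δ * M := by
            apply mul_le_mul_of_nonneg_left _ (by positivity)
            rw [hM]
            exact pow_le_pow_left₀ (by positivity) (max_le_max (le_refl 1) hzB) N
    have h2 : c * ‖z - lam0‖ ^ m ≤ ‖Q.eval z‖ := by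
      have h3 : Q.eval z = (z - lam0) ^ m * R.eval z := by
        conv_lhs => rw [← hRfac]
        simp [eval_pow]
      rw [h3, norm_mul, norm_pow]
      have h4 : c ≤ ‖R.eval z‖ := hρ' z (le_trans hzr hr0ρ)
      calc c * ‖z - lam0‖ ^ m ≤ ‖R.eval z‖ * ‖z - lam0‖ ^ m := by
            apply mul_le_mul_of_nonneg_right h4 (by positivity)
        _ = ‖z - lam0‖ ^ m * ‖R.eval z‖ := by ring
    have h3 : ‖z - lam0‖ ^ m ≤ K * δ := by
      rw [hK, div_mul_eq_mul_div, le_div_iff₀ hcpos]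
      nlinarith
    have h4 := Real.rpow_le_rpow (by positivity) h3 (by positivity : (0:ℝ) ≤ 1/m)
    rw [hpow _ (norm_nonneg _), Real.mul_rpow hKpos.le hδ0] at h4
    exact h4
  have hfilter : Q'.roots.filter (fun z => ‖z - lam0‖ ≤ CC * δ ^ ((1:ℝ)/m))
      = Q'.roots.filter (fun z => ‖z - lam0‖ ≤ r0) := by
    apply Multiset.filter_congr
    intro z hz
    exact ⟨fun h => le_trans h hCδ, fun h => hsharp z hz h⟩
  rw [hfilter]
  exact hkey Q' hQ'm hQ'd (fun k hk => le_trans (hcoeff k hk) hδ1)
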